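/- Let μ be a shift-invariant probability measure on Ω = S^{ℤ^d} (S finite) satisfying GCB(D): for every local function F, E_μ[exp(F − E_μ F)] ≤ exp(D ∑_{x} δ_x(F)²). Then μ is mixing: for all local functions f, g, lim_{|x|→∞} ∫ f · (g ∘ θ_x) dμ = (∫ f dμ)(∫ g dμ). -/

import Mathlib

open MeasureTheory Filter

/-- The shift action: `(θ_x ω)_y = ω_{y - x}`. -/
def shift {S : Type*} {d : ℕ} (x : Fin d → ℤ) (ω : (Fin d → ℤ) → S) : (Fin d → ℤ) → S :=
  fun y => ω (y - x)

/-- The oscillation of `F : S^{ℤ^d} → ℝ` at the site `x`. -/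
noncomputable def osc {S : Type*} {d : ℕ} (f : ((Fin d → ℤ) → S) → ℝ) (x : Fin d → ℤ) : ℝ :=
  sSup {r | ∃ ω η : (Fin d → ℤ) → S, (∀ y, y ≠ x → ω y = η y) ∧ r = |f ω - f η|}

/-- A local function: it depends only on finitely many coordinates. -/
def IsLocal {S : Type*} {d : ℕ} (f : ((Fin d → ℤ) → S) → ℝ) : Prop :=
  ∃ Λ : Finset (Fin d → ℤ), ∀ ω η : (Fin d → ℤ) → S, (∀ x ∈ Λ, ω x = η x) → f ω = f η

namespace GCBAux

variable {S : Type*} {d : ℕ}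

lemma measurable_shift [MeasurableSpace S] (x : Fin d → ℤ) :
    Measurable (shift (S := S) x) :=
  measurable_pi_lambda _ fun y => measurable_pi_apply (y - x)

lemma osc_nonneg (f : ((Fin d → ℤ) → S) → ℝ) (x : Fin d → ℤ) : 0 ≤ osc f x := by
  apply Real.sSup_nonneg
  rintro r ⟨ω, η, -, rfl⟩
  exact abs_nonneg _

lemma osc_le {f : ((Fin d → ℤ) → S) → ℝ} {x : Fin d → ℤ} {a : ℝ} (ha : 0 ≤ a)
    (h : ∀ ω η : (Fin d → ℤ) → S, (∀ y, y ≠ x → ω y = η y) → |f ω - f η| ≤ a) :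
    osc f x ≤ a := by
  apply Real.sSup_le _ ha
  rintro r ⟨ω, η, hagree, rfl⟩
  exact h ω η hagree

lemma isLocal_bounded [Fintype S] [Nonempty S] {f : ((Fin d → ℤ) → S) → ℝ}
    (hf : IsLocal f) : ∃ M : ℝ, 0 ≤ M ∧ ∀ ω, |f ω| ≤ M := by
  classical
  obtain ⟨Λ, hΛ⟩ := hf
  set F : ({y // y ∈ Λ} → S) → ℝ :=
    fun σ => f (fun y => if h : y ∈ Λ then σ ⟨y, h⟩ else Classical.arbitrary S) with hF
  have key : ∀ ω, f ω = F (fun z => ω z.1) := by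
    intro ω
    apply hΛ
    intro y hy
    simp [hy]
  have hsub : Set.range f ⊆ Set.range F := by
    rintro _ ⟨ω, rfl⟩
    exact ⟨fun z => ω z.1, (key ω).symm⟩
  have hfin : (Set.range f).Finite := (Set.finite_range F).subset hsub
  obtain ⟨M, hM⟩ := (hfin.image abs).bddAbove
  have hb : ∀ ω, |f ω| ≤ M := fun ω =>
    hM (Set.mem_image_of_mem _ (Set.mem_range_self ω))
  refine ⟨M, ?_, hb⟩
  have : Nonempty ((Fin d → ℤ) → S) := ⟨fun _ => Classical.arbitrary S⟩
  exact le_trans (abs_nonneg _) (hb (Classical.arbitrary _))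

end GCBAux

namespace GCBAux

variable {S : Type*} {d : ℕ} [Fintype S] [MeasurableSpace S] [MeasurableSingletonClass S]

lemma integrable_of_bound (μ : Measure ((Fin d → ℤ) → S)) [IsFiniteMeasure μ]
    {h : ((Fin d → ℤ) → S) → ℝ} (hm : Measurable h) (C : ℝ) (hb : ∀ ω, |h ω| ≤ C) :
    Integrable h μ :=
  ⟨hm.aestronglyMeasurable,
    HasFiniteIntegral.of_bounded (C := C) (ae_of_all _ (by simpa [Real.norm_eq_abs] using hb))⟩

lemma integral_comp_shift (μ : Measure ((Fin d → ℤ) → S))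
    (hinv : ∀ x : Fin d → ℤ, μ.map (shift x) = μ) (x : Fin d → ℤ)
    {h : ((Fin d → ℤ) → S) → ℝ} (hm : Measurable h) :
    ∫ ω, h (shift x ω) ∂μ = ∫ ω, h ω ∂μ := by
  conv_rhs => rw [← hinv x]
  rw [integral_map (measurable_shift x).aemeasurable hm.aestronglyMeasurable]

lemma key_estimate (μ : Measure ((Fin d → ℤ) → S)) [IsProbabilityMeasure μ]
    (hinv : ∀ x : Fin d → ℤ, μ.map (shift x) = μ)
    (D : ℝ) (hD : 0 < D)
    (hGCB : ∀ F : ((Fin d → ℤ) → S) → ℝ, IsLocal F →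
      ∫ ω, Real.exp (F ω - ∫ η, F η ∂μ) ∂μ ≤
        Real.exp (D * ∑' x : Fin d → ℤ, osc F x ^ 2))
    (f g : ((Fin d → ℤ) → S) → ℝ) (hf : IsLocal f) (hg : IsLocal g)
    (hfm : Measurable f) (hgm : Measurable g) :
    ∃ B : ℝ, 0 ≤ B ∧ ∀ V : Finset (Fin d → ℤ),
      |∑ x ∈ V, (∫ ω, f ω * g (shift x ω) ∂μ - (∫ ω, f ω ∂μ) * ∫ ω, g ω ∂μ)| ≤
        B * Real.sqrt V.card := by
  classical
  -- S is nonempty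
  have hSne : Nonempty S := by
    by_contra h
    rw [not_nonempty_iff] at h
    have he : IsEmpty ((Fin d → ℤ) → S) := ⟨fun ω => h.false (ω 0)⟩
    have h1 : (Set.univ : Set ((Fin d → ℤ) → S)) = ∅ := Set.univ_eq_empty_iff.mpr he
    have h2 := measure_univ (μ := μ)
    rw [h1, measure_empty] at h2
    exact zero_ne_one h2
  obtain ⟨Mf, hMf0, hMf⟩ := isLocal_bounded hf
  obtain ⟨Mg, hMg0, hMg⟩ := isLocal_bounded hg
  obtain ⟨Λ, hΛ⟩ := hg
  set K : ℝ := 4 * Mg ^ 2 * (Λ.card : ℝ) ^ 3 with hK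
  have hK0 : 0 ≤ K := by positivity
  refine ⟨2 * Mf * Real.exp (D * K), by positivity, ?_⟩
  intro V
  rcases V.eq_empty_or_nonempty with rfl | hVne
  · simp
  set n : ℕ := V.card with hn
  have hn0 : 0 < n := Finset.card_pos.mpr hVne
  have hnR : (0:ℝ) < n := by exact_mod_cast hn0
  set lam : ℝ := (Real.sqrt n)⁻¹ with hlam
  have hsq : Real.sqrt n > 0 := Real.sqrt_pos.mpr hnR
  have hlam0 : 0 < lam := inv_pos.mpr hsq
  -- the ergodic sum
  set FV : ((Fin d → ℤ) → S) → ℝ := fun ω => ∑ x ∈ V, g (shift x ω) with hFV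
  have hFVm : Measurable FV := Finset.measurable_sum _ fun x _ => hgm.comp (measurable_shift x)
  have hFVb : ∀ ω, |FV ω| ≤ n * Mg := by
    intro ω
    calc |FV ω| ≤ ∑ x ∈ V, |g (shift x ω)| := Finset.abs_sum_le_sum_abs _ _
    _ ≤ ∑ _x ∈ V, Mg := Finset.sum_le_sum fun x _ => hMg _
    _ = n * Mg := by rw [Finset.sum_const, nsmul_eq_mul]
  -- mean of FV
  have hgshift_int : ∀ x : Fin d → ℤ, Integrable (fun ω => g (shift x ω)) μ := fun x =>
    integrable_of_bound μ (hgm.comp (measurable_shift x)) Mg fun ω => hMg _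
  have hEFV : ∫ ω, FV ω ∂μ = n * ∫ ω, g ω ∂μ := by
    rw [hFV]
    rw [integral_finset_sum V fun x _ => hgshift_int x]
    rw [Finset.sum_congr rfl fun x _ => integral_comp_shift μ hinv x hgm]
    rw [Finset.sum_const, nsmul_eq_mul]
  set EFV : ℝ := ∫ ω, FV ω ∂μ with hEFVdef
  have hEFVb : |EFV| ≤ n * Mg := by
    have := norm_integral_le_of_norm_le_const (μ := μ) (f := FV) (C := n * Mg)
      (ae_of_all _ fun ω => by simpa [Real.norm_eq_abs] using hFVb ω)
    simpa [Real.norm_eq_abs, measure_univ] using this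
  set X : ((Fin d → ℤ) → S) → ℝ := fun ω => FV ω - EFV with hX
  have hXm : Measurable X := hFVm.sub measurable_const
  have hXb : ∀ ω, |X ω| ≤ 2 * (n * Mg) := by
    intro ω
    calc |X ω| ≤ |FV ω| + |EFV| := abs_sub _ _
    _ ≤ n * Mg + n * Mg := add_le_add (hFVb ω) hEFVb
    _ = 2 * (n * Mg) := by ring
  -- locality of c • FV and its oscillation bounds
  set W : Finset (Fin d → ℤ) := V.biUnion (fun x => Λ.image (fun a => a - x)) with hW
  have hWcard : (W.card : ℝ) ≤ n * Λ.card := by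
    have h1 : W.card ≤ ∑ x ∈ V, (Λ.image (fun a => a - x)).card := Finset.card_biUnion_le
    have h2 : ∑ x ∈ V, (Λ.image (fun a => a - x)).card ≤ ∑ _x ∈ V, Λ.card :=
      Finset.sum_le_sum fun x _ => Finset.card_image_le
    have : W.card ≤ n * Λ.card := by
      calc W.card ≤ ∑ _x ∈ V, Λ.card := le_trans h1 h2
      _ = n * Λ.card := by rw [Finset.sum_const, smul_eq_mul]
    exact_mod_cast this
  have hlocal : ∀ c : ℝ, IsLocal (fun ω => c * FV ω) := by
    intro c
    refine ⟨W, fun ω η hagree => ?_⟩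
    have : FV ω = FV η := by
      apply Finset.sum_congr rfl
      intro x hx
      apply hΛ
      intro a ha
      show ω (a - x) = η (a - x)
      exact hagree _ (Finset.mem_biUnion.mpr ⟨x, hx, Finset.mem_image.mpr ⟨a, ha, rfl⟩⟩)
    show c * FV ω = c * FV η
    rw [this]
  -- FV ω and FV η are close when ω, η differ at one site
  have hFVosc : ∀ (y : Fin d → ℤ) (ω η : (Fin d → ℤ) → S), (∀ z, z ≠ y → ω z = η z) →
      |FV ω - FV η| ≤ 2 * Mg * Λ.card := by
    intro y ω η hagree
    have hterm : ∀ x ∈ V, |g (shift x ω) - g (shift x η)| ≤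
        if y + x ∈ Λ then 2 * Mg else 0 := by
      intro x _
      by_cases hyx : y + x ∈ Λ
      · simp only [hyx, if_true]
        calc |g (shift x ω) - g (shift x η)| ≤ |g (shift x ω)| + |g (shift x η)| := abs_sub _ _
        _ ≤ Mg + Mg := add_le_add (hMg _) (hMg _)
        _ = 2 * Mg := by ring
      · simp only [hyx, if_false]
        have : g (shift x ω) = g (shift x η) := by
          apply hΛ
          intro a ha
          show ω (a - x) = η (a - x)
          apply hagree
          intro hay
          apply hyx
          rw [← hay]
          simpa using ha
        simp [this]
    calc |FV ω - FV η| = |∑ x ∈ V, (g (shift x ω) - g (shift x η))| := by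
          simp only [hFV, Finset.sum_sub_distrib]
    _ ≤ ∑ x ∈ V, |g (shift x ω) - g (shift x η)| := Finset.abs_sum_le_sum_abs _ _
    _ ≤ ∑ x ∈ V, (if y + x ∈ Λ then 2 * Mg else 0) := Finset.sum_le_sum hterm
    _ = ∑ x ∈ V.filter (fun x => y + x ∈ Λ), 2 * Mg := (Finset.sum_filter _ _).symm
    _ = (V.filter (fun x => y + x ∈ Λ)).card * (2 * Mg) := by
          rw [Finset.sum_const, nsmul_eq_mul]
    _ ≤ Λ.card * (2 * Mg) := by
          apply mul_le_mul_of_nonneg_right _ (by positivity)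
          have : (V.filter (fun x => y + x ∈ Λ)).card ≤ Λ.card := by
            apply Finset.card_le_card_of_injOn (fun x => y + x)
            · intro x hx
              exact (Finset.mem_filter.mp hx).2
            · intro a _ b _ hab
              exact add_left_cancel hab
          exact_mod_cast this
    _ = 2 * Mg * Λ.card := by ring
  -- oscillation of c • FV
  have hosc_le : ∀ (c : ℝ) (y : Fin d → ℤ),
      osc (fun ω => c * FV ω) y ≤ |c| * (2 * Mg * Λ.card) := by
    intro c y
    apply osc_le (by positivity)
    intro ω η hagree
    calc |c * FV ω - c * FV η| = |c| * |FV ω - FV η| := by rw [← mul_sub, abs_mul]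
    _ ≤ |c| * (2 * Mg * Λ.card) :=
        mul_le_mul_of_nonneg_left (hFVosc y ω η hagree) (abs_nonneg c)
  have hosc_zero : ∀ (c : ℝ) (y : Fin d → ℤ), y ∉ W → osc (fun ω => c * FV ω) y = 0 := by
    intro c y hy
    refine le_antisymm (osc_le le_rfl ?_) (osc_nonneg _ _)
    intro ω η hagree
    have : FV ω = FV η := by
      apply Finset.sum_congr rfl
      intro x hx
      apply hΛ
      intro a ha
      show ω (a - x) = η (a - x)
      apply hagree
      intro hax
      apply hy
      rw [hW]
      exact Finset.mem_biUnion.mpr ⟨x, hx, Finset.mem_image.mpr ⟨a, ha, hax⟩⟩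
    simp [this]
  -- tsum bound
  have htsum : ∀ c : ℝ, c ^ 2 = lam ^ 2 →
      ∑' y : Fin d → ℤ, osc (fun ω => c * FV ω) y ^ 2 ≤ K := by
    intro c hc
    rw [tsum_eq_sum (s := W) (fun y hy => by rw [hosc_zero c y hy]; ring)]
    have hb : ∀ y ∈ W, osc (fun ω => c * FV ω) y ^ 2 ≤ lam ^ 2 * (2 * Mg * Λ.card) ^ 2 := by
      intro y _
      have h1 := hosc_le c y
      have h2 := osc_nonneg (fun ω => c * FV ω) y
      calc osc (fun ω => c * FV ω) y ^ 2 ≤ (|c| * (2 * Mg * Λ.card)) ^ 2 := by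
            apply sq_le_sq' _ h1
            linarith
      _ = c ^ 2 * (2 * Mg * Λ.card) ^ 2 := by rw [mul_pow, sq_abs]
      _ = lam ^ 2 * (2 * Mg * Λ.card) ^ 2 := by rw [hc]
    calc ∑ y ∈ W, osc (fun ω => c * FV ω) y ^ 2
        ≤ ∑ _y ∈ W, lam ^ 2 * (2 * Mg * Λ.card) ^ 2 := Finset.sum_le_sum hb
    _ = W.card * (lam ^ 2 * (2 * Mg * Λ.card) ^ 2) := by rw [Finset.sum_const, nsmul_eq_mul]
    _ ≤ (n * Λ.card) * (lam ^ 2 * (2 * Mg * Λ.card) ^ 2) := by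
        apply mul_le_mul_of_nonneg_right hWcard (by positivity)
    _ = K := by
        have hl2 : lam ^ 2 = (n : ℝ)⁻¹ := by
          rw [hlam, ← Real.sqrt_inv]
          exact Real.sq_sqrt (by positivity)
        rw [hl2, hK]
        field_simp
        ring
  -- GCB for ±lam • FV
  have hGCB' : ∀ c : ℝ, c ^ 2 = lam ^ 2 →
      ∫ ω, Real.exp (c * X ω) ∂μ ≤ Real.exp (D * K) := by
    intro c hc
    have h1 := hGCB (fun ω => c * FV ω) (hlocal c)
    have h2 : ∫ η, c * FV η ∂μ = c * EFV := by
      rw [hEFVdef, integral_const_mul]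
    have h3 : (fun ω => Real.exp (c * FV ω - ∫ η, c * FV η ∂μ)) =
        fun ω => Real.exp (c * X ω) := by
      funext ω
      rw [h2, hX]
      ring_nf
    rw [h3] at h1
    calc ∫ ω, Real.exp (c * X ω) ∂μ ≤
        Real.exp (D * ∑' y : Fin d → ℤ, osc (fun ω => c * FV ω) y ^ 2) := h1
    _ ≤ Real.exp (D * K) := by
        apply Real.exp_le_exp.mpr
        exact mul_le_mul_of_nonneg_left (htsum c hc) hD.le
  -- integrability of exponentials
  have hexp_int : ∀ c : ℝ, Integrable (fun ω => Real.exp (c * X ω)) μ := by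
    intro c
    apply integrable_of_bound μ (Real.measurable_exp.comp (hXm.const_mul c))
      (Real.exp (|c| * (2 * (n * Mg))))
    intro ω
    show |Real.exp (c * X ω)| ≤ _
    rw [abs_of_pos (Real.exp_pos _)]
    apply Real.exp_le_exp.mpr
    calc c * X ω ≤ |c * X ω| := le_abs_self _
    _ = |c| * |X ω| := abs_mul _ _
    _ ≤ |c| * (2 * (n * Mg)) := mul_le_mul_of_nonneg_left (hXb ω) (abs_nonneg c)
  -- bound on ∫ |X|
  have hXint : Integrable X μ := integrable_of_bound μ hXm _ hXb
  have habsX : ∫ ω, |X ω| ∂μ ≤ 2 * Real.exp (D * K) * Real.sqrt n := by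
    have hpt : ∀ ω, lam * |X ω| ≤ Real.exp (lam * X ω) + Real.exp (-(lam * X ω)) := by
      intro ω
      have h1 := Real.add_one_le_exp (lam * X ω)
      have h2 := Real.add_one_le_exp (-(lam * X ω))
      have h3 := (Real.exp_pos (lam * X ω)).le
      have h4 := (Real.exp_pos (-(lam * X ω))).le
      rcases abs_cases (X ω) with ⟨h5, -⟩ | ⟨h5, -⟩ <;> rw [h5]
      · linarith
      · rw [mul_neg]; linarith
    have h6 : lam * ∫ ω, |X ω| ∂μ ≤ 2 * Real.exp (D * K) := by
      calc lam * ∫ ω, |X ω| ∂μ = ∫ ω, lam * |X ω| ∂μ := (integral_const_mul _ _).symm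
      _ ≤ ∫ ω, (Real.exp (lam * X ω) + Real.exp (-(lam * X ω))) ∂μ := by
          have h2 := hexp_int (-lam)
          simp only [neg_mul] at h2
          exact integral_mono (hXint.abs.const_mul lam) ((hexp_int lam).add h2) hpt
      _ = (∫ ω, Real.exp (lam * X ω) ∂μ) + ∫ ω, Real.exp (-(lam * X ω)) ∂μ := by
          have h2 := hexp_int (-lam)
          simp only [neg_mul] at h2
          exact integral_add (hexp_int lam) h2
      _ ≤ Real.exp (D * K) + Real.exp (D * K) := by
          apply add_le_add (hGCB' lam (by ring))
          have h2 := hGCB' (-lam) (by ring)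
          simp only [neg_mul] at h2
          exact h2
      _ = 2 * Real.exp (D * K) := by ring
    have h7 : ∫ ω, |X ω| ∂μ ≤ 2 * Real.exp (D * K) / lam := by
      rw [le_div_iff₀ hlam0]
      linarith [h6]
    calc ∫ ω, |X ω| ∂μ ≤ 2 * Real.exp (D * K) / lam := h7
    _ = 2 * Real.exp (D * K) * Real.sqrt n := by
        rw [hlam]
        field_simp
  -- the sum of correlations equals ∫ f * X
  have hfgx_int : ∀ x : Fin d → ℤ, Integrable (fun ω => f ω * g (shift x ω)) μ := by
    intro x
    apply integrable_of_bound μ (hfm.mul (hgm.comp (measurable_shift x))) (Mf * Mg)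
    intro ω
    rw [Pi.mul_apply, abs_mul]
    exact mul_le_mul (hMf ω) (hMg _) (abs_nonneg _) hMf0
  have hsum_eq : ∑ x ∈ V, (∫ ω, f ω * g (shift x ω) ∂μ - (∫ ω, f ω ∂μ) * ∫ ω, g ω ∂μ) =
      ∫ ω, f ω * X ω ∂μ := by
    have hfFV : Integrable (fun ω => f ω * FV ω) μ := by
      apply integrable_of_bound μ (hfm.mul hFVm) (Mf * (n * Mg))
      intro ω
      rw [Pi.mul_apply, abs_mul]
      exact mul_le_mul (hMf ω) (hFVb ω) (abs_nonneg _) hMf0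
    have hfint : Integrable f μ := integrable_of_bound μ hfm Mf hMf
    have h1 : ∫ ω, f ω * X ω ∂μ = (∫ ω, f ω * FV ω ∂μ) - EFV * ∫ ω, f ω ∂μ := by
      have : (fun ω => f ω * X ω) = fun ω => f ω * FV ω - EFV * f ω := by
        funext ω; rw [hX]; ring
      rw [this, integral_sub hfFV (hfint.const_mul EFV), integral_const_mul]
    have h2 : ∫ ω, f ω * FV ω ∂μ = ∑ x ∈ V, ∫ ω, f ω * g (shift x ω) ∂μ := by
      have : (fun ω => f ω * FV ω) = fun ω => ∑ x ∈ V, f ω * g (shift x ω) := by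
        funext ω; rw [hFV, Finset.mul_sum]
      rw [this, integral_finset_sum V fun x _ => hfgx_int x]
    rw [h1, h2, Finset.sum_sub_distrib, Finset.sum_const, hEFV]
    push_cast
    ring
  -- conclude
  rw [hsum_eq]
  have hfX_int : Integrable (fun ω => f ω * X ω) μ := by
    apply integrable_of_bound μ (hfm.mul hXm) (Mf * (2 * (n * Mg)))
    intro ω
    rw [Pi.mul_apply, abs_mul]
    exact mul_le_mul (hMf ω) (hXb ω) (abs_nonneg _) hMf0
  calc |∫ ω, f ω * X ω ∂μ| ≤ ∫ ω, |f ω * X ω| ∂μ := by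
        simpa only [Real.norm_eq_abs] using
          norm_integral_le_integral_norm (μ := μ) (fun ω => f ω * X ω)
  _ ≤ ∫ ω, Mf * |X ω| ∂μ := by
      apply integral_mono hfX_int.abs (hXint.abs.const_mul Mf)
      intro ω
      show |f ω * X ω| ≤ Mf * |X ω|
      rw [abs_mul]
      exact mul_le_mul_of_nonneg_right (hMf ω) (abs_nonneg _)
  _ = Mf * ∫ ω, |X ω| ∂μ := integral_const_mul _ _
  _ ≤ Mf * (2 * Real.exp (D * K) * Real.sqrt n) := mul_le_mul_of_nonneg_left habsX hMf0
  _ = 2 * Mf * Real.exp (D * K) * Real.sqrt n := by ring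

end GCBAux

theorem gcb_implies_mixing
    {S : Type*} [Fintype S] [MeasurableSpace S] [MeasurableSingletonClass S] {d : ℕ}
    (μ : Measure ((Fin d → ℤ) → S)) [IsProbabilityMeasure μ]
    (hinv : ∀ x : Fin d → ℤ, μ.map (shift x) = μ)
    (D : ℝ) (hD : 0 < D)
    (hGCB : ∀ F : ((Fin d → ℤ) → S) → ℝ, IsLocal F →
      ∫ ω, Real.exp (F ω - ∫ η, F η ∂μ) ∂μ ≤
        Real.exp (D * ∑' x : Fin d → ℤ, osc F x ^ 2))
    (f g : ((Fin d → ℤ) → S) → ℝ) (hf : IsLocal f) (hg : IsLocal g)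
    (hfm : Measurable f) (hgm : Measurable g) :
    Tendsto (fun x : Fin d → ℤ => ∫ ω, f ω * g (shift x ω) ∂μ) cofinite
      (nhds ((∫ ω, f ω ∂μ) * ∫ ω, g ω ∂μ)) := by
  classical
  obtain ⟨B, hB0, hB⟩ := GCBAux.key_estimate μ hinv D hD hGCB f g hf hg hfm hgm
  set L : ℝ := (∫ ω, f ω ∂μ) * ∫ ω, g ω ∂μ with hL
  set c : (Fin d → ℤ) → ℝ := fun x => (∫ ω, f ω * g (shift x ω) ∂μ) - L with hc
  by_contra hcon
  rw [Metric.tendsto_nhds] at hcon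
  push_neg at hcon
  obtain ⟨ε, hε, hev⟩ := hcon
  simp only [← not_lt] at hev
  have hinf := Filter.frequently_cofinite_iff_infinite.mp hev
  -- the main claim: the set {x | ε ≤ s * c x} is finite for s = ±1
  have claim : ∀ s : ℝ, s = 1 ∨ s = -1 → ¬ ({x : Fin d → ℤ | ε ≤ s * c x}.Infinite) := by
    intro s hs hA
    set n : ℕ := ⌊(B / ε) ^ 2⌋₊ + 1 with hn
    obtain ⟨V, hVsub, hVcard⟩ := hA.exists_subset_card_eq n
    have hn1 : 1 ≤ n := Nat.le_add_left 1 _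
    have hnR : (0:ℝ) < n := by exact_mod_cast hn1
    have hsqpos : 0 < Real.sqrt n := Real.sqrt_pos.mpr hnR
    have h1 : (n:ℝ) * ε ≤ ∑ x ∈ V, s * c x := by
      calc (n:ℝ) * ε = ∑ _x ∈ V, ε := by
            rw [Finset.sum_const, nsmul_eq_mul, hVcard]
      _ ≤ ∑ x ∈ V, s * c x := Finset.sum_le_sum fun x hx => hVsub hx
    have h2 : ∑ x ∈ V, s * c x = s * ∑ x ∈ V, c x := (Finset.mul_sum _ _ _).symm
    have h3 : s * ∑ x ∈ V, c x ≤ |∑ x ∈ V, c x| := by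
      rcases hs with rfl | rfl
      · simpa using le_abs_self _
      · rw [neg_one_mul]; exact neg_le_abs _
    have h4 : |∑ x ∈ V, c x| ≤ B * Real.sqrt n := by
      have := hB V
      rw [hVcard] at this
      exact this
    have h5 : (n:ℝ) * ε ≤ B * Real.sqrt n := by
      calc (n:ℝ) * ε ≤ s * ∑ x ∈ V, c x := h1.trans (le_of_eq h2)
      _ ≤ B * Real.sqrt n := h3.trans h4
    have hs2 : Real.sqrt n * Real.sqrt n = n := Real.mul_self_sqrt (by positivity)
    have h6 : Real.sqrt n * ε ≤ B := by
      have h7 : (Real.sqrt n * ε) * Real.sqrt n ≤ B * Real.sqrt n := by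
        calc (Real.sqrt n * ε) * Real.sqrt n = (n:ℝ) * ε := by
              rw [mul_comm (Real.sqrt n) ε, mul_assoc, hs2, mul_comm]
        _ ≤ B * Real.sqrt n := h5
      exact le_of_mul_le_mul_right h7 hsqpos
    have h8 : Real.sqrt n ≤ B / ε := (le_div_iff₀ hε).mpr h6
    have h9 : (n:ℝ) ≤ (B / ε) ^ 2 := by
      calc (n:ℝ) = Real.sqrt n * Real.sqrt n := hs2.symm
      _ ≤ (B / ε) * (B / ε) := mul_le_mul h8 h8 (Real.sqrt_nonneg _) (by positivity)
      _ = (B / ε) ^ 2 := (sq (B / ε)).symm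
    have h10 : (B / ε) ^ 2 < (n:ℝ) := by
      rw [hn]
      push_cast
      exact Nat.lt_floor_add_one _
    linarith
  -- split the infinite set
  have hsplit : {x : Fin d → ℤ | ¬ dist (∫ ω, f ω * g (shift x ω) ∂μ) L < ε} ⊆
      {x : Fin d → ℤ | ε ≤ 1 * c x} ∪ {x : Fin d → ℤ | ε ≤ (-1) * c x} := by
    intro x hx
    simp only [Set.mem_setOf_eq, not_lt, Real.dist_eq] at hx
    rcases abs_cases ((∫ ω, f ω * g (shift x ω) ∂μ) - L) with ⟨h1, -⟩ | ⟨h1, -⟩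
    · left
      simp only [Set.mem_setOf_eq, one_mul, hc]
      rw [← h1]; exact hx
    · right
      simp only [Set.mem_setOf_eq, neg_one_mul, hc]
      rw [← h1]; exact hx
  have hU : ({x : Fin d → ℤ | ε ≤ 1 * c x} ∪ {x : Fin d → ℤ | ε ≤ (-1) * c x}).Infinite :=
    hinf.mono hsplit
  rcases Set.infinite_union.mp hU with hA | hA
  · exact claim 1 (Or.inl rfl) hA
  · exact claim (-1) (Or.inr rfl) hA
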